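/- Let R = (Σ, I, T) be a regular transition system. For every b ≥ 1, the set Ind_b(R) is a regular language over Σ (it is recognized by some deterministic finite automaton). -/

import Mathlib

/-- A regular transition system: an NFA `I` over `Σ` for the initial
configurations and a transducer (an NFA over `Σ × Σ`) `T` for the transitions. -/
structure RTS (Sig QI QT : Type) where
  I : NFA Sig QI
  T : NFA (Sig × Sig) QT

/-- `w ⇝ u`: the equal-length pair `(w,u)`, identified with the zipped word over
`Σ × Σ`, is accepted by the transducer. -/
def RTS.Step {Sig QI QT : Type} (R : RTS Sig QI QT) (w u : List Sig) : Prop :=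
  w.length = u.length ∧ w.zip u ∈ R.T.accepts

/-- `Reach(R)`: configurations reachable from some initial configuration under the
reflexive-transitive closure of `⇝`. -/
def RTS.Reach {Sig QI QT : Type} (R : RTS Sig QI QT) : Set (List Sig) :=
  { w | ∃ u ∈ R.I.accepts, Relation.ReflTransGen R.Step u w }

/-- A `b`-formula (of length `φ.length`) is a word over the alphabet of
`b`-tuples of subsets of `Σ`. -/
abbrev BFormula (Sig : Type) (b : ℕ) := List (Fin b → Set Sig)

/-- `w ⊨ φ` iff `|w| ≠ |φ|`, or `|w| = |φ|` and for every clause `i` there is a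
position `j` with `w[j] ∈ φ[j]_i`. -/
def BSat {Sig : Type} {b : ℕ} (w : List Sig) (φ : BFormula Sig b) : Prop :=
  w.length ≠ φ.length ∨
    ∀ i : Fin b, ∃ (j : ℕ) (h₁ : j < w.length) (h₂ : j < φ.length),
      w.get ⟨j, h₁⟩ ∈ φ.get ⟨j, h₂⟩ i

/-- A set of configurations is inductive if it is closed under `⇝`. -/
def IsInductiveSet {Sig QI QT : Type} (R : RTS Sig QI QT) (S : Set (List Sig)) : Prop :=
  ∀ w ∈ S, ∀ u, R.Step w u → u ∈ S

/-- A `b`-formula is inductive if the set of words satisfying it is inductive. -/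
def IsInductiveBFormula {Sig QI QT : Type} {b : ℕ} (R : RTS Sig QI QT)
    (φ : BFormula Sig b) : Prop :=
  ∀ w u, BSat w φ → R.Step w u → BSat u φ

/-- `u ⇝_b w`: every inductive `b`-formula satisfied by `u` is satisfied by `w`. -/
def BPotReach {Sig QI QT : Type} (b : ℕ) (R : RTS Sig QI QT) (u w : List Sig) : Prop :=
  ∀ φ : BFormula Sig b, IsInductiveBFormula R φ → BSat u φ → BSat w φ

/-- `Ind_b(R) = { w : u ⇝_b w for some initial u }`. -/
def Ind {Sig QI QT : Type} (b : ℕ) (R : RTS Sig QI QT) : Set (List Sig) :=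
  { w | ∃ u ∈ R.I.accepts, BPotReach b R u w }

/-- A set `S` is `b`-bounded if for every length `ℓ` there is a `b`-formula of
length `ℓ` whose satisfying words of length `ℓ` are exactly `S ∩ Σ^ℓ`. -/
def IsBBounded {Sig : Type} (b : ℕ) (S : Set (List Sig)) : Prop :=
  ∀ ℓ : ℕ, ∃ φ : BFormula Sig b, φ.length = ℓ ∧
    ∀ w : List Sig, w.length = ℓ → (w ∈ S ↔ BSat w φ)

namespace IndRegAux

open Set

/-! ### Generic regularity framework -/

def Reg {α : Type} (L : Set (List α)) : Prop :=
  ∃ (Q : Type) (_ : Fintype Q) (A : DFA α Q), A.accepts = L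

theorem reg_nfa {α Q : Type} [Fintype Q] (M : NFA α Q) : Reg (M.accepts : Set (List α)) :=
  ⟨Set Q, inferInstance, M.toDFA, M.toDFA_correct⟩

theorem Reg.compl {α : Type} {L : Set (List α)} (h : Reg L) : Reg Lᶜ := by
  obtain ⟨Q, fQ, A, rfl⟩ := h
  exact ⟨Q, fQ, ⟨A.step, A.start, A.acceptᶜ⟩, rfl⟩

def prodDFA {α Q1 Q2 : Type} (A : DFA α Q1) (B : DFA α Q2) : DFA α (Q1 × Q2) where
  step p a := (A.step p.1 a, B.step p.2 a)
  start := (A.start, B.start)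
  accept := {p | p.1 ∈ A.accept ∧ p.2 ∈ B.accept}

theorem prodDFA_evalFrom {α Q1 Q2 : Type} (A : DFA α Q1) (B : DFA α Q2) (s : Q1) (t : Q2)
    (x : List α) : (prodDFA A B).evalFrom (s, t) x = (A.evalFrom s x, B.evalFrom t x) := by
  induction x generalizing s t with
  | nil => rfl
  | cons a x ih => simpa [DFA.evalFrom, prodDFA] using ih _ _

theorem Reg.inter {α : Type} {L L' : Set (List α)} (h : Reg L) (h' : Reg L') : Reg (L ∩ L') := by
  obtain ⟨Q, fQ, A, rfl⟩ := h
  obtain ⟨Q', fQ', B, rfl⟩ := h'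
  refine ⟨Q × Q', inferInstance, prodDFA A B, ?_⟩
  ext x
  rw [DFA.mem_accepts]
  show (prodDFA A B).evalFrom (A.start, B.start) x ∈ _ ↔ _
  rw [prodDFA_evalFrom]
  exact Iff.rfl

theorem Reg.preimage {α β : Type} {L : Set (List β)} (h : Reg L) (f : α → β) :
    Reg {x : List α | x.map f ∈ L} := by
  obtain ⟨Q, fQ, A, rfl⟩ := h
  refine ⟨Q, fQ, ⟨fun s a => A.step s (f a), A.start, A.accept⟩, ?_⟩
  have key : ∀ (x : List α) (s : Q),
      DFA.evalFrom ⟨fun s a => A.step s (f a), A.start, A.accept⟩ s x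
        = A.evalFrom s (x.map f) := by
    intro x
    induction x with
    | nil => intro s; rfl
    | cons a x ih => intro s; simpa [DFA.evalFrom] using ih _
  ext x
  simp only [DFA.mem_accepts, DFA.eval, key]
  exact Iff.rfl

def mapNFA {α β Q : Type} (M : NFA α Q) (f : α → β) : NFA β Q where
  step q b := {q' | ∃ a, f a = b ∧ q' ∈ M.step q a}
  start := M.start
  accept := M.accept

theorem evalFrom_iUnion {α Q : Type} (M : NFA α Q) {ι : Type} (S : ι → Set Q) (x : List α) :
    M.evalFrom (⋃ i, S i) x = ⋃ i, M.evalFrom (S i) x := by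
  induction x generalizing S with
  | nil => simp
  | cons a x ih =>
    have hstep : M.stepSet (⋃ i, S i) a = ⋃ i, M.stepSet (S i) a := by
      ext q; simp [NFA.mem_stepSet]; tauto
    simp only [NFA.evalFrom, List.foldl_cons, hstep]
    exact ih _

theorem mem_evalFrom_mapNFA {α β Q : Type} (M : NFA α Q) (f : α → β) (S : Set Q) (y : List β)
    (q : Q) : q ∈ (mapNFA M f).evalFrom S y ↔ ∃ x, x.map f = y ∧ q ∈ M.evalFrom S x := by
  induction y generalizing S with
  | nil =>
    simp only [NFA.evalFrom_nil]
    constructor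
    · intro h; exact ⟨[], rfl, h⟩
    · rintro ⟨x, hx, h⟩
      rw [List.map_eq_nil_iff] at hx; subst hx; exact h
  | cons b y ih =>
    have hstep : (mapNFA M f).stepSet S b = ⋃ a : {a : α // f a = b}, M.stepSet S a.1 := by
      ext q; simp [NFA.mem_stepSet, mapNFA]; tauto
    simp only [NFA.evalFrom, List.foldl_cons]
    rw [show List.foldl (mapNFA M f).stepSet ((mapNFA M f).stepSet S b) y
        = (mapNFA M f).evalFrom ((mapNFA M f).stepSet S b) y from rfl, ih, hstep]
    constructor
    · rintro ⟨x, hx, hq⟩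
      rw [evalFrom_iUnion] at hq
      obtain ⟨a, hq⟩ := mem_iUnion.mp hq
      exact ⟨a.1 :: x, by simp [a.2, hx], hq⟩
    · rintro ⟨x, hx, hq⟩
      cases x with
      | nil => simp at hx
      | cons a x =>
        simp only [List.map_cons, List.cons.injEq] at hx
        refine ⟨x, hx.2, ?_⟩
        rw [evalFrom_iUnion]
        exact mem_iUnion.mpr ⟨⟨a, hx.1⟩, hx.2 ▸ hq⟩

theorem Reg.image {α β : Type} {L : Set (List α)} (h : Reg L) (f : α → β) :
    Reg {y : List β | ∃ x ∈ L, x.map f = y} := by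
  obtain ⟨Q, fQ, A, rfl⟩ := h
  have : (mapNFA A.toNFA f).accepts = {y : List β | ∃ x ∈ A.accepts, x.map f = y} := by
    ext y
    rw [NFA.mem_accepts]
    constructor
    · rintro ⟨q, hq, hev⟩
      rw [show (mapNFA A.toNFA f).start = A.toNFA.start from rfl,
        mem_evalFrom_mapNFA] at hev
      obtain ⟨x, hx, hev⟩ := hev
      refine ⟨x, ?_, hx⟩
      rw [← DFA.toNFA_correct (M := A), NFA.mem_accepts]
      exact ⟨q, hq, hev⟩
    · rintro ⟨x, hx, hxy⟩
      rw [← DFA.toNFA_correct (M := A), NFA.mem_accepts] at hx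
      obtain ⟨q, hq, hev⟩ := hx
      exact ⟨q, hq, (mem_evalFrom_mapNFA _ _ _ _ _).mpr ⟨x, hxy, hev⟩⟩
  exact cast (congrArg Reg this) (reg_nfa _)

def satDFA {α : Type} (b : ℕ) (P : Fin b → α → Prop) : DFA α (Set (Fin b)) where
  step S a := S ∪ {i | P i a}
  start := ∅
  accept := {Set.univ}

theorem satDFA_evalFrom {α : Type} (b : ℕ) (P : Fin b → α → Prop) (S : Set (Fin b))
    (x : List α) : (satDFA b P).evalFrom S x = S ∪ {i | ∃ a ∈ x, P i a} := by
  induction x generalizing S with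
  | nil => simp [DFA.evalFrom]
  | cons a x ih =>
    simp only [DFA.evalFrom, List.foldl_cons] at *
    rw [ih]
    ext i
    simp [satDFA]
    tauto

theorem reg_sat {α : Type} (b : ℕ) (P : Fin b → α → Prop) :
    Reg {x : List α | ∀ i : Fin b, ∃ a ∈ x, P i a} := by
  refine ⟨Set (Fin b), inferInstance, satDFA b P, ?_⟩
  ext x
  rw [DFA.mem_accepts, DFA.eval, satDFA_evalFrom]
  simp [satDFA, Set.eq_univ_iff_forall]
  rfl

/-! ### BSat via zipped words -/

variable {Sig : Type} {b : ℕ}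

theorem bsat_map {A : Type} (z : List A) (f : A → Sig) (g : A → (Fin b → Set Sig)) :
    BSat (z.map f) (z.map g) ↔ ∀ i : Fin b, ∃ a ∈ z, f a ∈ g a i := by
  unfold BSat
  simp only [List.length_map, ne_eq, not_true_eq_false, false_or]
  constructor
  · intro h i
    obtain ⟨j, h1, h2, hm⟩ := h i
    simp only [List.get_eq_getElem, List.getElem_map] at hm
    refine ⟨z.get ⟨j, by simpa using h1⟩, List.get_mem _ _, ?_⟩
    simpa using hm
  · intro h i
    obtain ⟨a, ha, hm⟩ := h i
    obtain ⟨n, rfl⟩ := List.mem_iff_get.mp ha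
    exact ⟨n.1, by simpa using n.2, by simpa using n.2, by simpa using hm⟩

theorem length_eq_of_not_bsat {w : List Sig} {φ : BFormula Sig b} (h : ¬ BSat w φ) :
    w.length = φ.length := by
  by_contra hne; exact h (Or.inl hne)

theorem exists_zip3 (p : List (Sig × Sig)) (φ : BFormula Sig b) (h : p.length = φ.length) :
    ∃ z : List (Sig × Sig × (Fin b → Set Sig)),
      z.map (fun a => (a.1, a.2.1)) = p ∧ z.map (·.1) = p.map Prod.fst ∧
      z.map (·.2.1) = p.map Prod.snd ∧ z.map (·.2.2) = φ := by
  refine ⟨(p.zip φ).map (fun x => (x.1.1, x.1.2, x.2)), ?_, ?_, ?_, ?_⟩ <;>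
    rw [List.map_map]
  · show List.map (fun x => ((x.1.1 : Sig), (x.1.2 : Sig))) (p.zip φ) = p
    have : (fun x : (Sig × Sig) × (Fin b → Set Sig) => (x.1.1, x.1.2)) = Prod.fst := by
      funext x; rfl
    rw [this, List.map_fst_zip (le_of_eq h)]
  · have : ((fun a : Sig × Sig × (Fin b → Set Sig) => a.1) ∘
        fun x : (Sig × Sig) × (Fin b → Set Sig) => (x.1.1, x.1.2, x.2))
        = Prod.fst ∘ Prod.fst := rfl
    rw [this, ← List.map_map, List.map_fst_zip (le_of_eq h)]
  · have : ((fun a : Sig × Sig × (Fin b → Set Sig) => a.2.1) ∘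
        fun x : (Sig × Sig) × (Fin b → Set Sig) => (x.1.1, x.1.2, x.2))
        = Prod.snd ∘ Prod.fst := rfl
    rw [this, ← List.map_map, List.map_fst_zip (le_of_eq h)]
  · have : ((fun a : Sig × Sig × (Fin b → Set Sig) => a.2.2) ∘
        fun x : (Sig × Sig) × (Fin b → Set Sig) => (x.1.1, x.1.2, x.2))
        = Prod.snd := rfl
    rw [this, List.map_snd_zip (ge_of_eq h)]

theorem exists_zip2 (u w : List Sig) (h : u.length = w.length) :
    ∃ p : List (Sig × Sig), p.map Prod.fst = u ∧ p.map Prod.snd = w :=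
  ⟨u.zip w, List.map_fst_zip (le_of_eq h), List.map_snd_zip (ge_of_eq h)⟩

/-! ### The languages of the construction -/

variable {QI QT : Type} (R : RTS Sig QI QT)

/-- first component satisfies every clause of the formula component -/
def S1 (Sig : Type) (b : ℕ) : Set (List (Sig × Sig × (Fin b → Set Sig))) :=
  {z | ∀ i : Fin b, ∃ a ∈ z, a.1 ∈ a.2.2 i}

/-- second component satisfies every clause of the formula component -/
def S2 (Sig : Type) (b : ℕ) : Set (List (Sig × Sig × (Fin b → Set Sig))) :=
  {z | ∀ i : Fin b, ∃ a ∈ z, a.2.1 ∈ a.2.2 i}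

/-- the two word components form a transition -/
def Lstep (b : ℕ) : Set (List (Sig × Sig × (Fin b → Set Sig))) :=
  {z | z.map (fun a => (a.1, a.2.1)) ∈ R.T.accepts}

/-- inductive `b`-formulas, as a language -/
def IndPhi (b : ℕ) : Set (List (Fin b → Set Sig)) := {φ | IsInductiveBFormula R φ}

/-- pairs `(u,w)` (zipped) such that `u ⇝_b w` FAILS -/
def NotPot (b : ℕ) : Set (List (Sig × Sig)) :=
  {p | ∃ z ∈ S1 Sig b ∩ (S2 Sig b)ᶜ ∩ {z | z.map (·.2.2) ∈ IndPhi R b},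
    z.map (fun a => (a.1, a.2.1)) = p}

theorem step_map (z : List (Sig × Sig × (Fin b → Set Sig))) :
    R.Step (z.map (·.1)) (z.map (·.2.1)) ↔ z ∈ Lstep R b := by
  unfold RTS.Step Lstep
  rw [List.zip_map']
  simp

theorem indPhi_eq :
    IndPhi R b = {φ | ∃ z ∈ Lstep R b ∩ S1 Sig b ∩ (S2 Sig b)ᶜ, z.map (·.2.2) = φ}ᶜ := by
  ext φ
  simp only [IndPhi, Set.mem_setOf_eq, Set.mem_compl_iff]
  constructor
  · rintro hInd ⟨z, ⟨⟨hst, hs1⟩, hs2⟩, rfl⟩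
    have hw : BSat (z.map (·.1)) (z.map (·.2.2)) := (bsat_map _ _ _).mpr hs1
    have hstep : R.Step (z.map (·.1)) (z.map (·.2.1)) := (step_map R z).mpr hst
    have hu := hInd _ _ hw hstep
    exact hs2 ((bsat_map _ _ _).mp hu)
  · intro hnex w u hw hstep
    by_contra hu
    have hl1 : w.length = u.length := hstep.1
    have hl2 : u.length = φ.length := length_eq_of_not_bsat hu
    obtain ⟨p, hpf, hps⟩ := exists_zip2 w u hl1
    have hplen : p.length = φ.length := by
      rw [← hl2, ← hps, List.length_map]
    obtain ⟨z, hzp, hz1, hz2, hz3⟩ := exists_zip3 p φ hplen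
    rw [hpf] at hz1
    rw [hps] at hz2
    refine hnex ⟨z, ⟨⟨?_, ?_⟩, ?_⟩, hz3⟩
    · show z.map (fun a => (a.1, a.2.1)) ∈ R.T.accepts
      rw [hzp, List.zip_of_prod hpf hps]
      exact hstep.2
    · have : BSat (z.map (·.1)) (z.map (·.2.2)) := by rw [hz1, hz3]; exact hw
      exact (bsat_map _ _ _).mp this
    · intro hmem
      exact hu (by rw [← hz2, ← hz3]; exact (bsat_map _ _ _).mpr hmem)

theorem notPot_iff (b : ℕ) (p : List (Sig × Sig)) :
    p ∈ NotPot R b ↔ ¬ BPotReach b R (p.map Prod.fst) (p.map Prod.snd) := by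
  constructor
  · rintro ⟨z, ⟨⟨hs1, hs2⟩, hind⟩, rfl⟩ hpot
    have hf : (z.map (fun a => (a.1, a.2.1))).map Prod.fst = z.map (·.1) := by
      rw [List.map_map]; rfl
    have hs : (z.map (fun a => (a.1, a.2.1))).map Prod.snd = z.map (·.2.1) := by
      rw [List.map_map]; rfl
    rw [hf, hs] at hpot
    have hu : BSat (z.map (·.1)) (z.map (·.2.2)) := (bsat_map _ _ _).mpr hs1
    have hw := hpot _ hind hu
    exact hs2 ((bsat_map _ _ _).mp hw)
  · intro hnpot
    unfold BPotReach at hnpot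
    push_neg at hnpot
    obtain ⟨φ, hindφ, hu, hw⟩ := hnpot
    have hplen : p.length = φ.length := by
      have := length_eq_of_not_bsat hw
      rwa [List.length_map] at this
    obtain ⟨z, hzp, hz1, hz2, hz3⟩ := exists_zip3 p φ hplen
    refine ⟨z, ⟨⟨?_, ?_⟩, ?_⟩, hzp⟩
    · have : BSat (z.map (·.1)) (z.map (·.2.2)) := by rw [hz1, hz3]; exact hu
      exact (bsat_map _ _ _).mp this
    · intro hmem
      exact hw (by rw [← hz2, ← hz3]; exact (bsat_map _ _ _).mpr hmem)
    · show z.map (·.2.2) ∈ IndPhi R b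
      rw [hz3]; exact hindφ

theorem length_eq_of_bpot (hb : 1 ≤ b) {u w : List Sig} (h : BPotReach b R u w) :
    u.length = w.length := by
  classical
  set φ₀ : BFormula Sig b := List.replicate w.length (fun _ => (∅ : Set Sig)) with hφ₀
  have hsat : ∀ x : List Sig, BSat x φ₀ ↔ x.length ≠ w.length := by
    intro x
    constructor
    · rintro (hx | hx)
      · simpa [hφ₀] using hx
      · intro hlen
        obtain ⟨j, h1, h2, hm⟩ := hx ⟨0, hb⟩
        have : φ₀.get ⟨j, h2⟩ = fun _ => (∅ : Set Sig) := by simp [hφ₀]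
        rw [this] at hm
        exact hm
    · intro hx
      exact Or.inl (by simpa [hφ₀] using hx)
  have hind : IsInductiveBFormula R φ₀ := by
    intro w' u' hw' hst
    refine (hsat u').mpr ?_
    rw [← hst.1]
    exact (hsat w').mp hw'
  by_contra hne
  exact (hsat w).mp (h φ₀ hind ((hsat u).mpr hne)) rfl

theorem ind_eq (hb : 1 ≤ b) :
    Ind b R = {w | ∃ p ∈ {p : List (Sig × Sig) | p.map Prod.fst ∈ R.I.accepts}
      ∩ (NotPot R b)ᶜ, p.map Prod.snd = w} := by
  ext w
  constructor
  · rintro ⟨u, hu, hpot⟩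
    obtain ⟨p, hpf, hps⟩ := exists_zip2 u w (length_eq_of_bpot R hb hpot)
    refine ⟨p, ⟨by rw [Set.mem_setOf_eq, hpf]; exact hu, ?_⟩, hps⟩
    intro hnp
    exact (notPot_iff R b p).mp hnp (by rw [hpf, hps]; exact hpot)
  · rintro ⟨p, ⟨hI, hnp⟩, rfl⟩
    refine ⟨p.map Prod.fst, hI, ?_⟩
    by_contra h
    exact hnp ((notPot_iff R b p).mpr h)

end IndRegAux

/-- For every RTS `R` and every `b ≥ 1`, the set `Ind_b(R)` is a
regular language over `Σ`: it is recognized by some DFA with a finite state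
type. -/
theorem Ind_regular
    {Sig QI QT : Type} [Fintype Sig] [Fintype QI] [Fintype QT]
    (R : RTS Sig QI QT) (b : ℕ) (hb : 1 ≤ b) :
    ∃ (Q : Type) (_ : Fintype Q) (A : DFA Sig Q),
      A.accepts = Ind b R := by
  classical
  open IndRegAux in
  suffices h : IndRegAux.Reg (Ind b R) by exact h
  have hS1 : IndRegAux.Reg (IndRegAux.S1 Sig b) := by
    unfold IndRegAux.S1; exact IndRegAux.reg_sat b _
  have hS2 : IndRegAux.Reg (IndRegAux.S2 Sig b) := by
    unfold IndRegAux.S2; exact IndRegAux.reg_sat b _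
  have hLstep : IndRegAux.Reg (IndRegAux.Lstep R b) := by
    unfold IndRegAux.Lstep
    exact IndRegAux.Reg.preimage (IndRegAux.reg_nfa R.T) (fun a : Sig × Sig × (Fin b → Set Sig) => (a.1, a.2.1))
  have hIndPhi : IndRegAux.Reg (IndRegAux.IndPhi R b) := by
    rw [IndRegAux.indPhi_eq]
    exact (((hLstep.inter hS1).inter hS2.compl).image (fun a : Sig × Sig × (Fin b → Set Sig) => a.2.2)).compl
  have hNotPot : IndRegAux.Reg (IndRegAux.NotPot R b) := by
    unfold IndRegAux.NotPot
    exact ((hS1.inter hS2.compl).inter (hIndPhi.preimage (fun a : Sig × Sig × (Fin b → Set Sig) => a.2.2))).image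
      (fun a : Sig × Sig × (Fin b → Set Sig) => (a.1, a.2.1))
  have hLI : IndRegAux.Reg {p : List (Sig × Sig) | p.map Prod.fst ∈ R.I.accepts} :=
    IndRegAux.Reg.preimage (IndRegAux.reg_nfa R.I) Prod.fst
  rw [IndRegAux.ind_eq R hb]
  exact (hLI.inter hNotPot.compl).image Prod.snd
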